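/- Fix integers p ≥ 1 and n ≥ 1, a point θ₀ ∈ ℝ^p, vectors g_1,…,g_n ∈ ℝ^p, rewards r_1,…,r_n ∈ ℝ, and reals λ > 0, m > 0. Let b : ℝ → ℝ be twice differentiable with constants 0 < L_b ≤ 1 ≤ U_b satisfying L_b ≤ b''(z) ≤ U_b for all z ∈ ℝ. Define ℓ_λ(θ) := ∑_{s=1}^n ( r_s·⟨g_s, θ − θ₀⟩ − b(⟨g_s, θ − θ₀⟩) ) − (m·λ/2)·‖θ − θ₀‖₂² and Z̄ := λ·I + (1/m)·∑_{s=1}^n g_s g_sᵀ. Let α ≥ 0 and g_a ∈ ℝ^p, let θ̂ be a global maximizer of ℓ_λ over ℝ^p, and let θ_a be a global maximizer of θ ↦ ℓ_λ(θ) + α·⟨g_a, θ − θ₀⟩ over ℝ^p. Then ‖θ̂ − θ_a‖_{Z̄} ≤ ( α / (m·L_b) ) · ‖g_a‖_{Z̄⁻¹}. -/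

import Mathlib

open Matrix

/-- The regularized exponential-family surrogate log-likelihood
ℓ_λ(θ) = ∑_s ( r_s·⟨g_s, θ−θ₀⟩ − b(⟨g_s, θ−θ₀⟩) ) − (mλ/2)·‖θ−θ₀‖₂². -/
noncomputable def ellLam {p n : ℕ} (θ₀ : Fin p → ℝ) (g : Fin n → Fin p → ℝ)
    (r : Fin n → ℝ) (b : ℝ → ℝ) (lam m : ℝ) (θ : Fin p → ℝ) : ℝ :=
  (∑ s, (r s * (g s ⬝ᵥ (θ - θ₀)) - b (g s ⬝ᵥ (θ - θ₀))))
    - m * lam / 2 * (∑ i, (θ i - θ₀ i) ^ 2)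

/-- The regularized Gram matrix Z̄ = λ·I + (1/m)·∑_s g_s g_sᵀ. -/
noncomputable def gramMat {p n : ℕ} (g : Fin n → Fin p → ℝ) (lam m : ℝ) :
    Matrix (Fin p) (Fin p) ℝ :=
  lam • (1 : Matrix (Fin p) (Fin p) ℝ) + (1 / m) • ∑ s, vecMulVec (g s) (g s)

/-- The M-weighted norm ‖v‖_M = √(vᵀ M v). -/
noncomputable def matNorm {p : ℕ} (M : Matrix (Fin p) (Fin p) ℝ) (v : Fin p → ℝ) : ℝ :=
  Real.sqrt (v ⬝ᵥ M.mulVec v)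


private lemma sum_mv {p n : ℕ} (A : Fin n → Matrix (Fin p) (Fin p) ℝ) (v : Fin p → ℝ) :
    (∑ s, A s) *ᵥ v = ∑ s, A s *ᵥ v := by
  ext i
  simp only [Matrix.mulVec, dotProduct, Matrix.sum_apply, Finset.sum_apply, Finset.sum_mul]
  exact Finset.sum_comm

private lemma vmv_mv {p : ℕ} (w x v : Fin p → ℝ) :
    vecMulVec w x *ᵥ v = (x ⬝ᵥ v) • w := by
  ext i
  simp only [Matrix.mulVec, dotProduct, vecMulVec_apply, Pi.smul_apply, smul_eq_mul,
    Finset.sum_mul]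
  exact Finset.sum_congr rfl fun j _ => by ring

private lemma dp_sum {p n : ℕ} (u : Fin p → ℝ) (f : Fin n → Fin p → ℝ) :
    u ⬝ᵥ (∑ s, f s) = ∑ s, u ⬝ᵥ f s := by
  simp only [dotProduct, Finset.sum_apply, Finset.mul_sum]
  exact Finset.sum_comm

private lemma gram_form {p n : ℕ} (g : Fin n → Fin p → ℝ) (lam m : ℝ) (u v : Fin p → ℝ) :
    u ⬝ᵥ (gramMat g lam m) *ᵥ v
      = lam * (u ⬝ᵥ v) + (1/m) * ∑ s, (g s ⬝ᵥ u) * (g s ⬝ᵥ v) := by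
  simp only [gramMat, Matrix.add_mulVec, Matrix.smul_mulVec, Matrix.one_mulVec,
    sum_mv, vmv_mv, dotProduct_add, dotProduct_smul, smul_eq_mul, dp_sum]
  simp only [Finset.mul_sum]
  congr 1
  exact Finset.sum_congr rfl fun s _ => by rw [dotProduct_comm u (g s)]; ring

private lemma gram_symm {p n : ℕ} (g : Fin n → Fin p → ℝ) (lam m : ℝ) (u v : Fin p → ℝ) :
    u ⬝ᵥ (gramMat g lam m) *ᵥ v = v ⬝ᵥ (gramMat g lam m) *ᵥ u := by
  rw [gram_form, gram_form, dotProduct_comm u v]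
  congr 1
  exact congrArg _ (Finset.sum_congr rfl fun s _ => mul_comm _ _)

private lemma gram_quad_nonneg {p n : ℕ} (g : Fin n → Fin p → ℝ) {lam m : ℝ}
    (hlam : 0 < lam) (hm : 0 < m) (v : Fin p → ℝ) :
    0 ≤ v ⬝ᵥ (gramMat g lam m) *ᵥ v := by
  rw [gram_form]
  have h1 : 0 ≤ v ⬝ᵥ v := Finset.sum_nonneg fun i _ => mul_self_nonneg _
  have h2 : 0 ≤ ∑ s, (g s ⬝ᵥ v) * (g s ⬝ᵥ v) := Finset.sum_nonneg fun s _ => mul_self_nonneg _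
  have h3 : 0 ≤ (1:ℝ)/m := by positivity
  nlinarith

private lemma gram_posdef {p n : ℕ} (g : Fin n → Fin p → ℝ) {lam m : ℝ}
    (hlam : 0 < lam) (hm : 0 < m) :
    (gramMat g lam m).PosDef := by
  refine Matrix.PosDef.of_dotProduct_mulVec_pos ?_ ?_
  · show (gramMat g lam m)ᴴ = gramMat g lam m
    ext i j
    simp only [conjTranspose_apply, star_trivial, gramMat, Matrix.add_apply, Matrix.smul_apply,
      Matrix.one_apply, Matrix.sum_apply, vecMulVec_apply, smul_eq_mul]
    by_cases h : i = j
    · subst h; ring_nf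
    · simp only [h, Ne.symm h, if_false]
      congr 1
      exact congrArg _ (Finset.sum_congr rfl fun s _ => mul_comm _ _)
  · intro x hx
    have hstar : star x = x := by
      funext i; simp
    rw [hstar, gram_form]
    have h1 : 0 < x ⬝ᵥ x := by
      rcases lt_or_eq_of_le (Finset.sum_nonneg fun i _ => mul_self_nonneg (x i) :
        (0:ℝ) ≤ x ⬝ᵥ x) with h | h
      · exact h
      · exact absurd (dotProduct_self_eq_zero.mp h.symm) hx
    have h2 : 0 ≤ ∑ s, (g s ⬝ᵥ x) * (g s ⬝ᵥ x) := Finset.sum_nonneg fun s _ => mul_self_nonneg _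
    have h3 : 0 ≤ (1:ℝ)/m := by positivity
    nlinarith

private lemma gram_cs {p n : ℕ} (g : Fin n → Fin p → ℝ) {lam m : ℝ}
    (hlam : 0 < lam) (hm : 0 < m) (u v : Fin p → ℝ) :
    u ⬝ᵥ (gramMat g lam m) *ᵥ v ≤
      Real.sqrt (u ⬝ᵥ (gramMat g lam m) *ᵥ u) * Real.sqrt (v ⬝ᵥ (gramMat g lam m) *ᵥ v) := by
  set Z := gramMat g lam m with hZ
  set a : ℝ := u ⬝ᵥ Z *ᵥ u with ha
  set c : ℝ := v ⬝ᵥ Z *ᵥ v with hc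
  set bq : ℝ := u ⬝ᵥ Z *ᵥ v with hb
  have ha0 : 0 ≤ a := gram_quad_nonneg g hlam hm u
  have hc0 : 0 ≤ c := gram_quad_nonneg g hlam hm v
  have hquad : ∀ t : ℝ, 0 ≤ a * (t * t) + (2 * bq) * t + c := by
    intro t
    have hexp : (t • u + v) ⬝ᵥ Z *ᵥ (t • u + v) = a * (t * t) + (2 * bq) * t + c := by
      rw [Matrix.mulVec_add, Matrix.mulVec_smul, dotProduct_add, add_dotProduct,
        add_dotProduct, dotProduct_smul, smul_dotProduct, smul_dotProduct]
      have hsy := gram_symm g lam m v u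
      rw [← hZ] at hsy
      simp only [dotProduct_smul, smul_eq_mul]
      rw [hsy]
      ring
    rw [← hexp]
    exact gram_quad_nonneg g hlam hm _
  have hdisc := discrim_le_zero hquad
  rw [discrim] at hdisc
  have hsq : bq ^ 2 ≤ a * c := by nlinarith
  calc bq ≤ |bq| := le_abs_self _
    _ = Real.sqrt (bq ^ 2) := (Real.sqrt_sq_eq_abs bq).symm
    _ ≤ Real.sqrt (a * c) := Real.sqrt_le_sqrt hsq
    _ = Real.sqrt a * Real.sqrt c := Real.sqrt_mul ha0 c

private lemma conv1 (b : ℝ → ℝ) (hb : Differentiable ℝ b) (hb' : Differentiable ℝ (deriv b))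
    (L c2 : ℝ) (hlow : ∀ z, L ≤ deriv (deriv b) z) :
    ConvexOn ℝ Set.univ (fun z => b z - L / 2 * z ^ 2 - c2 * z) := by
  set ψ : ℝ → ℝ := fun z => b z - L / 2 * z ^ 2 - c2 * z with hψ
  have hd1 : ∀ z, HasDerivAt ψ (deriv b z - (L * z + c2)) z := by
    intro z
    have h1 : HasDerivAt b (deriv b z) z := (hb z).hasDerivAt
    have h2 : HasDerivAt (fun z : ℝ => L / 2 * z ^ 2) (L / 2 * (2 * z ^ 1)) z :=
      (hasDerivAt_pow 2 z).const_mul (L / 2)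
    have h3 : HasDerivAt (fun z : ℝ => c2 * z) c2 z := by
      simpa using (hasDerivAt_id z).const_mul c2
    have := (h1.sub h2).sub h3
    rw [show deriv b z - (L * z + c2) = deriv b z - L / 2 * (2 * z ^ 1) - c2 by ring]
    exact this
  have hderψ : deriv ψ = fun z => deriv b z - (L * z + c2) := funext fun z => (hd1 z).deriv
  have hd2 : ∀ z, HasDerivAt (deriv ψ) (deriv (deriv b) z - L) z := by
    intro z
    rw [hderψ]
    have h1 : HasDerivAt (deriv b) (deriv (deriv b) z) z := (hb' z).hasDerivAt
    have h2 : HasDerivAt (fun z : ℝ => L * z + c2) L z := by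
      simpa using ((hasDerivAt_id z).const_mul L).add_const c2
    exact h1.sub h2
  refine convexOn_univ_of_deriv2_nonneg (fun z => (hd1 z).differentiableAt)
    (fun z => (hd2 z).differentiableAt) (fun z => ?_)
  have : deriv^[2] ψ z = deriv (deriv ψ) z := by
    simp [Function.iterate_succ, Function.iterate_zero, Function.comp]
  rw [this, (hd2 z).deriv]
  linarith [hlow z]

set_option maxHeartbeats 1600000 in
private lemma key {p n : ℕ} (θ₀ : Fin p → ℝ) (g : Fin n → Fin p → ℝ) (r : Fin n → ℝ)
    (lam m : ℝ) (hlam : 0 < lam) (hm : 0 < m) (b : ℝ → ℝ) (Lb : ℝ) (hLb : 0 < Lb)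
    (hLb1 : Lb ≤ 1)
    (hb : Differentiable ℝ b) (hb' : Differentiable ℝ (deriv b))
    (hlow : ∀ z, Lb ≤ deriv (deriv b) z)
    (w x : Fin p → ℝ)
    (hx : ∀ θ, ellLam θ₀ g r b lam m θ + w ⬝ᵥ (θ - θ₀) ≤
        ellLam θ₀ g r b lam m x + w ⬝ᵥ (x - θ₀))
    (y : Fin p → ℝ) :
    ellLam θ₀ g r b lam m y + w ⬝ᵥ (y - θ₀)
      + m * Lb / 2 * ((x - y) ⬝ᵥ (gramMat g lam m) *ᵥ (x - y))
      ≤ ellLam θ₀ g r b lam m x + w ⬝ᵥ (x - θ₀) := by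
  set f : (Fin p → ℝ) → ℝ := fun θ => ellLam θ₀ g r b lam m θ + w ⬝ᵥ (θ - θ₀) with hf
  set K : ℝ := (x - y) ⬝ᵥ (gramMat g lam m) *ᵥ (x - y) with hK
  set Nd : ℝ := ∑ i, (x i - y i) ^ 2 with hNd
  set SC : ℝ := ∑ s, (g s ⬝ᵥ (x - y)) ^ 2 with hSC
  clear_value f K Nd SC
  have hNd0 : 0 ≤ Nd := by rw [hNd]; exact Finset.sum_nonneg fun i _ => sq_nonneg _
  have hSC0 : 0 ≤ SC := by rw [hSC]; exact Finset.sum_nonneg fun u _ => sq_nonneg _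
  have hKform : K = lam * Nd + (1 / m) * SC := by
    rw [hK, gram_form]
    congr 1
    · congr 1
      simp [dotProduct, hNd, Pi.sub_apply, sq]
    · rw [hSC]
      exact congrArg _ (Finset.sum_congr rfl fun u _ => (sq (g u ⬝ᵥ (x - y))).symm)
  have hK0 : 0 ≤ K := by
    rw [hKform]
    have : 0 ≤ (1:ℝ)/m := by positivity
    nlinarith
  -- main convexity-style inequality
  have main : ∀ t : ℝ, 0 < t → t < 1 →
      (1 - t) * f x + t * f y + m * Lb / 2 * (t * (1 - t)) * K ≤ f ((1 - t) • x + t • y) := by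
    intro t ht0 ht1
    set s : ℝ := 1 - t with hs
    have hs0 : 0 < s := by simp [hs]; linarith
    set θt : Fin p → ℝ := s • x + t • y with hθt
    clear_value s θt
    have hsub : θt - θ₀ = s • (x - θ₀) + t • (y - θ₀) := by
      funext i
      simp only [hθt, Pi.sub_apply, Pi.add_apply, Pi.smul_apply, smul_eq_mul, hs]
      ring
    have hdotz : ∀ v : Fin p → ℝ, v ⬝ᵥ (θt - θ₀) = s * (v ⬝ᵥ (x - θ₀)) + t * (v ⬝ᵥ (y - θ₀)) := by
      intro v
      rw [hsub, dotProduct_add, dotProduct_smul, dotProduct_smul, smul_eq_mul, smul_eq_mul]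
    -- the quadratic norm part
    have hNsplit : ∑ i, (θt i - θ₀ i) ^ 2
        = s * (∑ i, (x i - θ₀ i) ^ 2) + t * (∑ i, (y i - θ₀ i) ^ 2) - t * s * Nd := by
      rw [hNd, Finset.mul_sum, Finset.mul_sum, Finset.mul_sum, ← Finset.sum_add_distrib,
        ← Finset.sum_sub_distrib]
      refine Finset.sum_congr rfl fun i _ => ?_
      simp only [hθt, Pi.add_apply, Pi.smul_apply, smul_eq_mul, hs]
      ring
    -- per-summand concavity bound
    have hsummand : ∀ u : Fin n,
        s * (r u * (g u ⬝ᵥ (x - θ₀)) - b (g u ⬝ᵥ (x - θ₀)))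
        + t * (r u * (g u ⬝ᵥ (y - θ₀)) - b (g u ⬝ᵥ (y - θ₀)))
        + Lb / 2 * (t * s) * (g u ⬝ᵥ (x - y)) ^ 2
        ≤ r u * (g u ⬝ᵥ (θt - θ₀)) - b (g u ⬝ᵥ (θt - θ₀)) := by
      intro u
      have hcv := (conv1 b hb hb' Lb (r u) hlow).2 (Set.mem_univ (g u ⬝ᵥ (x - θ₀)))
        (Set.mem_univ (g u ⬝ᵥ (y - θ₀))) (le_of_lt hs0) (le_of_lt ht0) (by rw [hs]; ring)
      simp only [smul_eq_mul] at hcv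
      set A : ℝ := g u ⬝ᵥ (x - θ₀) with hA
      set B : ℝ := g u ⬝ᵥ (y - θ₀) with hB
      have hC : g u ⬝ᵥ (x - y) = A - B := by
        rw [hA, hB, ← dotProduct_sub, sub_sub_sub_cancel_right]
      have hzt : g u ⬝ᵥ (θt - θ₀) = s * A + t * B := hdotz (g u)
      rw [hzt, hC]
      have hsq : (s * A + t * B) ^ 2 = s * A ^ 2 + t * B ^ 2 - s * t * (A - B) ^ 2 := by
        rw [hs]; ring
      nlinarith [hcv, hsq]
    -- sum them
    have hsum : s * (∑ u, (r u * (g u ⬝ᵥ (x - θ₀)) - b (g u ⬝ᵥ (x - θ₀))))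
        + t * (∑ u, (r u * (g u ⬝ᵥ (y - θ₀)) - b (g u ⬝ᵥ (y - θ₀))))
        + Lb / 2 * (t * s) * SC
        ≤ ∑ u, (r u * (g u ⬝ᵥ (θt - θ₀)) - b (g u ⬝ᵥ (θt - θ₀))) := by
      have := Finset.sum_le_sum (fun u (_ : u ∈ Finset.univ) => hsummand u)
      rw [Finset.sum_add_distrib, Finset.sum_add_distrib, ← Finset.mul_sum, ← Finset.mul_sum,
        ← Finset.mul_sum, ← hSC] at this
      exact this
    -- assemble
    have hwpart : w ⬝ᵥ (θt - θ₀) = s * (w ⬝ᵥ (x - θ₀)) + t * (w ⬝ᵥ (y - θ₀)) := hdotz w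
    have hcomp : m * Lb / 2 * (t * s) * K
        ≤ Lb / 2 * (t * s) * SC + m * lam / 2 * (t * s) * Nd := by
      have hexp : m * Lb / 2 * (t * s) * K
          = m * Lb * lam / 2 * (t * s) * Nd + Lb / 2 * (t * s) * SC := by
        rw [hKform]
        field_simp
      rw [hexp]
      have h1 : m * Lb * lam / 2 * (t * s) * Nd ≤ m * lam / 2 * (t * s) * Nd := by
        have hts : 0 ≤ t * s := by positivity
        have := mul_nonneg (mul_nonneg hts hNd0) (mul_nonneg (mul_nonneg hm.le hlam.le)
          (by linarith : (0:ℝ) ≤ 1 - Lb))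
        linarith
      linarith
    simp only [hf, ellLam]
    rw [hwpart, hNsplit]
    linarith [hsum, hcomp]
  -- deduce f x - f y ≥ m*Lb/2 * K by letting t → 0
  have step : ∀ t : ℝ, 0 < t → t < 1 → m * Lb / 2 * ((1 - t) * K) ≤ f x - f y := by
    intro t ht0 ht1
    have h1 := main t ht0 ht1
    have h2 : f ((1 - t) • x + t • y) ≤ f x := by simp only [hf]; exact hx _
    have h3 : (1 - t) * f x + t * f y + m * Lb / 2 * (t * (1 - t)) * K ≤ f x := by
      calc (1 - t) * f x + t * f y + m * Lb / 2 * (t * (1 - t)) * K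
          ≤ f ((1 - t) • x + t • y) := h1
        _ ≤ f x := h2
    have h4 : t * (m * Lb / 2 * ((1 - t) * K)) ≤ t * (f x - f y) := by nlinarith [h3]
    exact le_of_mul_le_mul_left h4 ht0
  have hlim : m * Lb / 2 * K ≤ f x - f y := by
    have htend : Filter.Tendsto (fun t : ℝ => m * Lb / 2 * ((1 - t) * K))
        (nhdsWithin 0 (Set.Ioi 0)) (nhds (m * Lb / 2 * ((1 - 0) * K))) :=
      ((continuous_const.mul ((continuous_const.sub continuous_id).mul
        continuous_const)).tendsto 0).mono_left nhdsWithin_le_nhds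
    have hev : ∀ᶠ t in nhdsWithin (0:ℝ) (Set.Ioi 0),
        m * Lb / 2 * ((1 - t) * K) ≤ f x - f y := by
      filter_upwards [Ioo_mem_nhdsGT_of_mem (Set.mem_Ico.mpr ⟨le_refl (0:ℝ), zero_lt_one⟩)]
        with t ht
      exact step t ht.1 ht.2
    have := le_of_tendsto htend hev
    simpa using this
  have : f y + m * Lb / 2 * K ≤ f x := by linarith
  simpa [hf, hK] using this

/-- ‖θ̂ − θ_a‖_{Z̄} ≤ (α/(m·L_b))·‖g_a‖_{Z̄⁻¹}, where θ̂ maximizes ℓ_λ and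
θ_a maximizes the reward-biased objective ℓ_λ(θ) + α·⟨g_a, θ − θ₀⟩. -/
theorem stmt7 {p n : ℕ} (hp : 1 ≤ p) (hn : 1 ≤ n)
    (θ₀ : Fin p → ℝ) (g : Fin n → Fin p → ℝ) (r : Fin n → ℝ)
    (lam m : ℝ) (hlam : 0 < lam) (hm : 0 < m)
    (b : ℝ → ℝ) (Lb Ub : ℝ) (hLb : 0 < Lb) (hLb1 : Lb ≤ 1) (hUb : 1 ≤ Ub)
    (hb : Differentiable ℝ b) (hb' : Differentiable ℝ (deriv b))
    (hlow : ∀ z : ℝ, Lb ≤ deriv (deriv b) z) (hup : ∀ z : ℝ, deriv (deriv b) z ≤ Ub)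
    (α : ℝ) (hα : 0 ≤ α) (ga : Fin p → ℝ)
    (θhat : Fin p → ℝ)
    (hθhat : ∀ θ : Fin p → ℝ, ellLam θ₀ g r b lam m θ ≤ ellLam θ₀ g r b lam m θhat)
    (θa : Fin p → ℝ)
    (hθa : ∀ θ : Fin p → ℝ, ellLam θ₀ g r b lam m θ + α * (ga ⬝ᵥ (θ - θ₀)) ≤
        ellLam θ₀ g r b lam m θa + α * (ga ⬝ᵥ (θa - θ₀))) :
    matNorm (gramMat g lam m) (θhat - θa) ≤
      α / (m * Lb) * matNorm (gramMat g lam m)⁻¹ ga := by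
  have hpd := gram_posdef g hlam hm
  have hdet : IsUnit (gramMat g lam m).det :=
    (Matrix.isUnit_iff_isUnit_det _).mp hpd.isUnit
  have hZZinv : gramMat g lam m * (gramMat g lam m)⁻¹ = 1 :=
    Matrix.mul_nonsing_inv _ hdet
  have hμ : 0 < m * Lb := mul_pos hm hLb
  -- apply the key lemma twice
  have hθhat' : ∀ θ : Fin p → ℝ,
      ellLam θ₀ g r b lam m θ + (fun _ : Fin p => (0:ℝ)) ⬝ᵥ (θ - θ₀) ≤
        ellLam θ₀ g r b lam m θhat + (fun _ : Fin p => (0:ℝ)) ⬝ᵥ (θhat - θ₀) := by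
    intro θ
    have h0 : ∀ v : Fin p → ℝ, (fun _ : Fin p => (0:ℝ)) ⬝ᵥ v = 0 := fun v => by
      simp [dotProduct]
    rw [h0, h0]
    simpa using hθhat θ
  have hθa' : ∀ θ : Fin p → ℝ,
      ellLam θ₀ g r b lam m θ + (α • ga) ⬝ᵥ (θ - θ₀) ≤
        ellLam θ₀ g r b lam m θa + (α • ga) ⬝ᵥ (θa - θ₀) := by
    intro θ
    have h1 : ∀ v : Fin p → ℝ, (α • ga) ⬝ᵥ v = α * (ga ⬝ᵥ v) := fun v => by
      rw [smul_dotProduct, smul_eq_mul]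
    rw [h1, h1]
    exact hθa θ
  have E1 := key θ₀ g r lam m hlam hm b Lb hLb hLb1 hb hb' hlow
    (fun _ => (0:ℝ)) θhat hθhat' θa
  have E2 := key θ₀ g r lam m hlam hm b Lb hLb hLb1 hb hb' hlow
    (α • ga) θa hθa' θhat
  have h0dp : ∀ v : Fin p → ℝ, (fun _ : Fin p => (0:ℝ)) ⬝ᵥ v = 0 := fun v => by
    simp [dotProduct]
  rw [h0dp, h0dp] at E1
  have hswap : (θhat - θa) ⬝ᵥ (gramMat g lam m) *ᵥ (θhat - θa)
      = (θa - θhat) ⬝ᵥ (gramMat g lam m) *ᵥ (θa - θhat) := by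
    have h : θhat - θa = -(θa - θhat) := (neg_sub θa θhat).symm
    rw [h, Matrix.mulVec_neg, dotProduct_neg, neg_dotProduct, neg_neg]
  set v : Fin p → ℝ := θa - θhat with hv
  set Qv : ℝ := v ⬝ᵥ (gramMat g lam m) *ᵥ v with hQv
  have hQv0 : 0 ≤ Qv := gram_quad_nonneg g hlam hm v
  have hdpdiff : (α • ga) ⬝ᵥ (θa - θ₀) - (α • ga) ⬝ᵥ (θhat - θ₀) = (α • ga) ⬝ᵥ v := by
    rw [← dotProduct_sub, hv, sub_sub_sub_cancel_right]
  have hμQ : m * Lb * Qv ≤ α * (ga ⬝ᵥ v) := by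
    have h1 : (α • ga) ⬝ᵥ v = α * (ga ⬝ᵥ v) := by rw [smul_dotProduct, smul_eq_mul]
    have h2 : (θa - θhat) ⬝ᵥ (gramMat g lam m) *ᵥ (θa - θhat) = Qv := by rw [hQv]
    rw [hswap] at E1
    have := hdpdiff
    rw [h1] at this
    linarith [E1, E2, this]
  -- Cauchy–Schwarz step
  set u : Fin p → ℝ := (gramMat g lam m)⁻¹ *ᵥ ga with hu
  have hZu : (gramMat g lam m) *ᵥ u = ga := by
    rw [hu, Matrix.mulVec_mulVec, hZZinv, Matrix.one_mulVec]
  have hgav : ga ⬝ᵥ v = u ⬝ᵥ (gramMat g lam m) *ᵥ v := by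
    calc ga ⬝ᵥ v = ((gramMat g lam m) *ᵥ u) ⬝ᵥ v := by rw [hZu]
      _ = v ⬝ᵥ ((gramMat g lam m) *ᵥ u) := dotProduct_comm _ _
      _ = u ⬝ᵥ (gramMat g lam m) *ᵥ v := gram_symm g lam m v u
  have hQu : u ⬝ᵥ (gramMat g lam m) *ᵥ u = ga ⬝ᵥ (gramMat g lam m)⁻¹ *ᵥ ga := by
    calc u ⬝ᵥ (gramMat g lam m) *ᵥ u = u ⬝ᵥ ga := by rw [hZu]
      _ = ga ⬝ᵥ u := dotProduct_comm _ _
      _ = ga ⬝ᵥ (gramMat g lam m)⁻¹ *ᵥ ga := by rw [hu]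
  have hcs := gram_cs g hlam hm u v
  set T : ℝ := Real.sqrt (ga ⬝ᵥ (gramMat g lam m)⁻¹ *ᵥ ga) with hT
  set S : ℝ := Real.sqrt Qv with hS
  have hT0 : 0 ≤ T := Real.sqrt_nonneg _
  have hS0 : 0 ≤ S := Real.sqrt_nonneg _
  have hS2 : S * S = Qv := Real.mul_self_sqrt hQv0
  have hcs' : ga ⬝ᵥ v ≤ T * S := by
    rw [hgav]
    calc u ⬝ᵥ (gramMat g lam m) *ᵥ v
        ≤ Real.sqrt (u ⬝ᵥ (gramMat g lam m) *ᵥ u) * Real.sqrt (v ⬝ᵥ (gramMat g lam m) *ᵥ v) :=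
          hcs
      _ = T * S := by rw [hQu, ← hQv, hT, hS]
  have hgoal_lhs : matNorm (gramMat g lam m) (θhat - θa) = S := by
    rw [matNorm, hswap]
  have hgoal_rhs : matNorm (gramMat g lam m)⁻¹ ga = T := by
    rw [matNorm, hT]
  rw [hgoal_lhs, hgoal_rhs]
  -- final arithmetic
  have hchain : m * Lb * (S * S) ≤ α * (T * S) := by
    rw [hS2]
    calc m * Lb * Qv ≤ α * (ga ⬝ᵥ v) := hμQ
      _ ≤ α * (T * S) := mul_le_mul_of_nonneg_left hcs' hα
  rcases eq_or_lt_of_le hS0 with h | h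
  · rw [← h]
    positivity
  · have h1 : m * Lb * S ≤ α * T := by
      have := hchain
      nlinarith
    rw [div_mul_eq_mul_div, le_div_iff₀ hμ]
    nlinarith
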